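/- Let S be a finite set, β > 0, π_pre and p* probability distributions on S with full support, and π a probability distribution on S with full support. If for all x_A, x_B ∈ S, σ(log p*(x_A) − log p*(x_B)) = σ(β·log(π(x_A)/π_pre(x_A)) − β·log(π(x_B)/π_pre(x_B))), then π(x) ∝ π_pre(x) · p*(x)^{1/β}, i.e., there exists c > 0 with π(x) = c · π_pre(x) · p*(x)^{1/β} for all x ∈ S. -/

import Mathlib

noncomputable def sigm (t : ℝ) : ℝ := 1 / (1 + Real.exp (-t))

lemma sigm_inj : Function.Injective sigm := by
  intro a b hab
  unfold sigm at hab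
  have ha : 0 < 1 + Real.exp (-a) := by positivity
  have hb : 0 < 1 + Real.exp (-b) := by positivity
  field_simp at hab
  have h2 := Real.exp_injective (show Real.exp (-a) = Real.exp (-b) by linarith)
  linarith

theorem stmt_7 {S : Type*} [Fintype S] [Nonempty S]
    (β : ℝ) (hβ : 0 < β)
    (πpre pstar π : S → ℝ)
    (hprepos : ∀ x, 0 < πpre x) (hpresum : ∑ x, πpre x = 1)
    (hppos : ∀ x, 0 < pstar x) (hpsum : ∑ x, pstar x = 1)
    (hπpos : ∀ x, 0 < π x) (hπsum : ∑ x, π x = 1)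
    (h : ∀ xA xB : S,
      sigm (Real.log (pstar xA) - Real.log (pstar xB)) =
      sigm (β * Real.log (π xA / πpre xA) - β * Real.log (π xB / πpre xB))) :
    ∃ c : ℝ, 0 < c ∧ ∀ x : S, π x = c * πpre x * pstar x ^ (1 / β) := by
  obtain ⟨x0⟩ := ‹Nonempty S›
  set c : ℝ := π x0 / πpre x0 * pstar x0 ^ (-(1 / β)) with hc
  have hcpos : 0 < c := mul_pos (div_pos (hπpos x0) (hprepos x0))
    (Real.rpow_pos_of_pos (hppos x0) _)
  refine ⟨c, hcpos, fun x => ?_⟩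
  have key := sigm_inj (h x x0)
  -- key : log pstar x - log pstar x0 = β * log(π x/πpre x) - β * log(π x0/πpre x0)
  have hpos : 0 < π x / πpre x := div_pos (hπpos x) (hprepos x)
  have hpos0 : 0 < π x0 / πpre x0 := div_pos (hπpos x0) (hprepos x0)
  have hlog : Real.log (π x / πpre x) =
      (1 / β) * Real.log (pstar x) - (1 / β) * Real.log (pstar x0) +
        Real.log (π x0 / πpre x0) := by
    field_simp
    nlinarith [key]
  have e1 : Real.exp (1 / β * Real.log (pstar x)) = pstar x ^ (1 / β) := by
    rw [Real.rpow_def_of_pos (hppos x), mul_comm]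
  have e0 : Real.exp (1 / β * Real.log (pstar x0)) = pstar x0 ^ (1 / β) := by
    rw [Real.rpow_def_of_pos (hppos x0), mul_comm]
  have hrw : π x / πpre x = c * pstar x ^ (1 / β) := by
    have hthis := congrArg Real.exp hlog
    rw [Real.exp_log hpos, Real.exp_add, Real.exp_sub, Real.exp_log hpos0, e1, e0] at hthis
    rw [hthis, hc, Real.rpow_neg (hppos x0).le]
    have h0 : pstar x0 ^ (1 / β) ≠ 0 := (Real.rpow_pos_of_pos (hppos x0) _).ne'
    field_simp
  rw [div_eq_iff (hprepos x).ne'] at hrw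
  linear_combination hrw
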